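/- Suppose 0 < p < q < ∞ and μ is a finite Borel measure on a compact Hausdorff space Ω. Then the Λ_{p,q}(μ)-quasinorm is the smallest admissible quasinorm with the following properties: (1) ‖·‖_{Λ_{p,q}} is monotone and homogeneous, satisfies a lower q-estimate ((Σ_i ‖f_i‖_{Λ_{p,q}}^q)^{1/q} ≤ ‖f_1 + ⋯ + f_n‖_{Λ_{p,q}} for disjointly supported f_i), and ‖χ_A‖_{Λ_{p,q}} ≥ μ(A)^{1/p} for every Borel set A; (2) if N : B(Ω) → [0, ∞] is any monotone homogeneous functional satisfying a lower q-estimate and N(χ_A) ≥ μ(A)^{1/p} for all Borel A, then N(f) ≥ ‖f‖_{Λ_{p,q}} for all Borel f. -/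

import Mathlib

open Set Filter Topology MeasureTheory ENNReal

/-- `A : Fin n → Set Ω` is a finite Borel partition of `Ω`. -/
def IsBorelPartition {Ω : Type*} [MeasurableSpace Ω] {n : ℕ} (A : Fin n → Set Ω) : Prop :=
  (∀ i, MeasurableSet (A i)) ∧ Pairwise (Function.onFun Disjoint A) ∧ (⋃ i, A i) = univ

/-- The `Λ_{p,q}(μ)` functional for `p < q`:
`sup (Σᵢ (inf_{ω ∈ Aᵢ} |f ω|)^q μ(Aᵢ)^{q/p})^{1/q}` over finite Borel partitions. -/
noncomputable def LambdaSup {Ω : Type*} [MeasurableSpace Ω]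
    (μ : Measure Ω) (p q : ℝ) (f : Ω → ℝ) : ℝ≥0∞ :=
  ⨆ (n : ℕ) (A : Fin n → Set Ω) (_ : IsBorelPartition A),
    (∑ i, (⨅ x ∈ A i, ENNReal.ofReal |f x|) ^ q * μ (A i) ^ (q / p)) ^ (1 / q)

/-- The `Λ_{p,q}(μ)` functional for `q < p`:
`inf (Σᵢ (sup_{ω ∈ Aᵢ} |f ω|)^q μ(Aᵢ)^{q/p})^{1/q}` over finite Borel partitions.
(Here `LambdaInf μ p q` has inner exponent `q` and measure exponent `q/p`.) -/
noncomputable def LambdaInf {Ω : Type*} [MeasurableSpace Ω]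
    (μ : Measure Ω) (p q : ℝ) (f : Ω → ℝ) : ℝ≥0∞ :=
  ⨅ (n : ℕ) (A : Fin n → Set Ω) (_ : IsBorelPartition A),
    (∑ i, (⨆ x ∈ A i, ENNReal.ofReal |f x|) ^ q * μ (A i) ^ (q / p)) ^ (1 / q)

/-- The decreasing rearrangement `f*(t) = inf_{μ(E) ≤ t} sup_{ω ∉ E} |f ω|`. -/
noncomputable def decRearr {Ω : Type*} [MeasurableSpace Ω]
    (μ : Measure Ω) (f : Ω → ℝ) (t : ℝ) : ℝ≥0∞ :=
  ⨅ (E : Set Ω) (_ : MeasurableSet E) (_ : μ E ≤ ENNReal.ofReal t),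
    ⨆ x ∈ Eᶜ, ENNReal.ofReal |f x|

/-- The Lorentz quasinorm `‖f‖_{L_{p,q}(μ)} = (∫₀^∞ (q/p) t^{q/p-1} f*(t)^q dt)^{1/q}`. -/
noncomputable def LorentzNorm {Ω : Type*} [MeasurableSpace Ω]
    (μ : Measure Ω) (p q : ℝ) (f : Ω → ℝ) : ℝ≥0∞ :=
  (∫⁻ t in Ioi (0 : ℝ),
      ENNReal.ofReal (q / p * t ^ (q / p - 1)) * decRearr μ f t ^ q) ^ (1 / q)

/-- `f₁, …, fₙ` are disjointly supported. -/
def DisjSupp {Ω : Type*} {n : ℕ} (f : Fin n → Ω → ℝ) : Prop :=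
  ∀ i j, i ≠ j → ∀ x, f i x = 0 ∨ f j x = 0

namespace LambdaAux

lemma iSup_rpow' {ι : Sort*} {q : ℝ} (hq : 0 < q) (v : ι → ℝ≥0∞) :
    (⨆ i, v i) ^ q = ⨆ i, v i ^ q := by
  have h := map_iSup (ENNReal.orderIsoRpow q hq) v
  simp only [ENNReal.orderIsoRpow_apply] at h
  exact h

variable {Ω : Type*} [MeasurableSpace Ω]

/-- The type of finite Borel partitions. -/
abbrev Parts (Ω : Type*) [MeasurableSpace Ω] : Type _ :=
  Σ n : ℕ, {A : Fin n → Set Ω // IsBorelPartition A}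

instance : Nonempty (Parts Ω) :=
  ⟨⟨1, fun _ => univ, fun _ => MeasurableSet.univ, Subsingleton.pairwise, by rw [Set.iUnion_const]⟩⟩

noncomputable def w (μ : Measure Ω) (p q : ℝ) (f : Ω → ℝ) (P : Parts Ω) : ℝ≥0∞ :=
  ∑ i, (⨅ x ∈ P.2.1 i, ENNReal.ofReal |f x|) ^ q * μ (P.2.1 i) ^ (q / p)

lemma lambdaSup_eq (μ : Measure Ω) (p q : ℝ) (f : Ω → ℝ) :
    LambdaSup μ p q f = ⨆ P : Parts Ω, (w μ p q f P) ^ (1 / q) := by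
  rw [LambdaSup]
  symm
  rw [iSup_sigma]
  exact iSup_congr fun n =>
    (iSup_subtype' (f := fun (A : Fin n → Set Ω) (_ : IsBorelPartition A) =>
      (∑ i, (⨅ x ∈ A i, ENNReal.ofReal |f x|) ^ q * μ (A i) ^ (q / p)) ^ (1 / q))).symm

lemma lambdaSup_pow (μ : Measure Ω) {p q : ℝ} (hq : 0 < q) (f : Ω → ℝ) :
    LambdaSup μ p q f ^ q = ⨆ P : Parts Ω, w μ p q f P := by
  rw [lambdaSup_eq, iSup_rpow' hq]
  refine iSup_congr fun P => ?_
  rw [← ENNReal.rpow_mul, one_div_mul_cancel hq.ne', ENNReal.rpow_one]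


lemma mul_biInf {c : ℝ≥0∞} (hc0 : c ≠ 0) (hc : c ≠ ∞) {A : Set Ω} (g : Ω → ℝ≥0∞) :
    ⨅ x ∈ A, c * g x = c * ⨅ x ∈ A, g x := by
  refine le_antisymm ?_ (le_iInf₂ fun x hx => mul_le_mul_right (iInf₂_le x hx) c)
  calc ⨅ x ∈ A, c * g x = c * (c⁻¹ * ⨅ x ∈ A, c * g x) := by
        rw [← mul_assoc, ENNReal.mul_inv_cancel hc0 hc, one_mul]
  _ ≤ c * ⨅ x ∈ A, g x := by
        refine mul_le_mul_right (le_iInf₂ fun x hx => ?_) c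
        calc c⁻¹ * (⨅ x ∈ A, c * g x) ≤ c⁻¹ * (c * g x) :=
              mul_le_mul_right (iInf₂_le x hx) _
        _ = g x := by rw [← mul_assoc, ENNReal.inv_mul_cancel hc0 hc, one_mul]

lemma w_smul {μ : Measure Ω} {p q : ℝ} (hq : 0 < q) (hqp : 0 < q / p)
    (α : ℝ) (f : Ω → ℝ) (P : Parts Ω) :
    w μ p q (fun x => α * f x) P = (ENNReal.ofReal |α|) ^ q * w μ p q f P := by
  rw [w, w, Finset.mul_sum]
  refine Finset.sum_congr rfl fun i _ => ?_
  rcases eq_empty_or_nonempty (P.2.1 i) with h | h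
  · rw [h]; simp [ENNReal.zero_rpow_of_pos hqp]
  have hab : ∀ x : Ω, ENNReal.ofReal |α * f x|
      = ENNReal.ofReal |α| * ENNReal.ofReal |f x| := fun x => by
    rw [abs_mul, ENNReal.ofReal_mul (abs_nonneg _)]
  simp_rw [hab]
  rcases eq_or_ne (ENNReal.ofReal |α|) 0 with h0 | h0
  · rw [h0]
    simp only [zero_mul]
    rw [biInf_const h, ENNReal.zero_rpow_of_pos hq, zero_mul, zero_mul]
  · rw [mul_biInf h0 ENNReal.ofReal_ne_top,
      ENNReal.mul_rpow_of_nonneg _ _ hq.le, mul_assoc]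

lemma w_mono {μ : Measure Ω} {p q : ℝ} (hq : 0 < q) {f g : Ω → ℝ}
    (h : ∀ x, |f x| ≤ |g x|) (P : Parts Ω) : w μ p q f P ≤ w μ p q g P := by
  refine Finset.sum_le_sum fun i _ => mul_le_mul_left (ENNReal.rpow_le_rpow ?_ hq.le) _
  exact le_iInf₂ fun x hx =>
    (iInf₂_le x hx).trans (ENNReal.ofReal_le_ofReal (h x))

lemma sum_le_iSup_sum {ι : Type*} [DecidableEq ι] {κ : ι → Type*} [∀ i, Nonempty (κ i)]
    {s : Finset ι} (u : ∀ i, κ i → ℝ≥0∞) :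
    ∑ i ∈ s, ⨆ j, u i j ≤ ⨆ g : ∀ i, κ i, ∑ i ∈ s, u i (g i) := by
  induction s using Finset.induction with
  | empty => simp
  | insert a s ha ih =>
    rw [Finset.sum_insert ha]
    calc (⨆ j, u a j) + ∑ i ∈ s, ⨆ j, u i j
        ≤ (⨆ j, u a j) + ⨆ g : ∀ i, κ i, ∑ i ∈ s, u i (g i) := add_le_add_right ih _
      _ = ⨆ j, ⨆ g : ∀ i, κ i, (u a j + ∑ i ∈ s, u i (g i)) := by
          rw [ENNReal.iSup_add]; exact iSup_congr fun j => ENNReal.add_iSup _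
      _ ≤ ⨆ g : ∀ i, κ i, ∑ i ∈ insert a s, u i (g i) := by
          refine iSup₂_le fun j g => le_iSup_of_le (Function.update g a j) (le_of_eq ?_)
          rw [Finset.sum_insert ha, Function.update_self]
          refine congrArg _ (Finset.sum_congr rfl fun i hi => ?_)
          rw [Function.update_of_ne (ne_of_mem_of_not_mem hi ha)]

lemma key3 {μ : Measure Ω} {p q : ℝ} (hq : 0 < q)
    {m : ℕ} (f : Fin m → Ω → ℝ) (hf : ∀ i, Measurable (f i)) (hd : DisjSupp f)
    (g : Fin m → Parts Ω) :
    ∑ i, w μ p q (f i) (g i) ≤ LambdaSup μ p q (fun x => ∑ i, f i x) ^ q := by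
  classical
  rw [lambdaSup_pow μ hq]
  set S : Fin m → Set Ω := fun i => {x | f i x ≠ 0} with hS
  have hSmem : ∀ i x, x ∈ S i ↔ f i x ≠ 0 := fun i x => Iff.rfl
  have hSmeas : ∀ i, MeasurableSet (S i) := fun i =>
    ((hf i) (measurableSet_singleton 0)).compl
  have hSdisj : ∀ i j, i ≠ j → Disjoint (S i) (S j) := by
    intro i j hij
    rw [Set.disjoint_left]
    intro x hxi hxj
    rcases hd i j hij x with h | h
    · exact hxi h
    · exact hxj h
  set κ := (Σ i : Fin m, Fin (g i).1) ⊕ Unit with hκ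
  set B : κ → Set Ω :=
    Sum.elim (fun ij => (g ij.1).2.1 ij.2 ∩ S ij.1) (fun _ => (⋃ i, S i)ᶜ) with hB
  have hBmeas : ∀ k, MeasurableSet (B k) := by
    rintro (⟨i, j⟩ | u)
    · exact ((g i).2.2.1 j).inter (hSmeas i)
    · exact (MeasurableSet.iUnion fun i => hSmeas i).compl
  have hBdisj : Pairwise (Function.onFun Disjoint B) := by
    rintro (⟨i, j⟩ | u) (⟨i', j'⟩ | u') hne
    · rcases eq_or_ne i i' with rfl | hii
      · have hjj : j ≠ j' := by rintro rfl; exact hne rfl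
        exact ((g i).2.2.2.1 hjj).mono inter_subset_left inter_subset_left
      · exact (hSdisj i i' hii).mono inter_subset_right inter_subset_right
    · exact disjoint_compl_right.mono_left (inter_subset_right.trans (subset_iUnion S i))
    · exact (disjoint_compl_right.mono_left
        (inter_subset_right.trans (subset_iUnion S i'))).symm
    · exact absurd (congrArg Sum.inr (Subsingleton.elim u u')) hne
  have hBunion : (⋃ k, B k) = univ := by
    refine eq_univ_of_forall fun x => ?_
    by_cases hx : ∃ i, f i x ≠ 0
    · obtain ⟨i, hi⟩ := hx
      have hxuniv : x ∈ ⋃ j, (g i).2.1 j := by rw [(g i).2.2.2.2]; trivial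
      obtain ⟨j, hj⟩ := mem_iUnion.mp hxuniv
      exact mem_iUnion.mpr ⟨Sum.inl ⟨i, j⟩, ⟨hj, hi⟩⟩
    · push_neg at hx
      refine mem_iUnion.mpr ⟨Sum.inr (), ?_⟩
      simp only [hB, Sum.elim_inr, mem_compl_iff, mem_iUnion, not_exists]
      intro i hi
      exact hi (hx i)
  set e : κ ≃ Fin (Fintype.card κ) := Fintype.equivFin κ with he
  have hpart : IsBorelPartition (B ∘ e.symm) := by
    refine ⟨fun k => hBmeas _, ?_, ?_⟩
    · intro k k' hkk
      exact hBdisj fun h => hkk (by rw [← e.apply_symm_apply k, h, e.apply_symm_apply])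
    · rw [← hBunion]
      exact e.symm.surjective.iUnion_comp B
  refine le_trans ?_
    (le_iSup (w μ p q fun x => ∑ i, f i x)
      (⟨Fintype.card κ, ⟨B ∘ e.symm, hpart⟩⟩ : Parts Ω))
  have hw : w μ p q (fun x => ∑ i, f i x) ⟨Fintype.card κ, ⟨B ∘ e.symm, hpart⟩⟩
      = ∑ k : κ, (⨅ x ∈ B k, ENNReal.ofReal |∑ i, f i x|) ^ q * μ (B k) ^ (q / p) := by
    rw [w]
    exact Equiv.sum_comp e.symm fun k =>
      (⨅ x ∈ B k, ENNReal.ofReal |∑ i, f i x|) ^ q * μ (B k) ^ (q / p)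
  rw [hw, Fintype.sum_sum_type]
  refine le_trans ?_ le_self_add
  rw [← Finset.univ_sigma_univ, Finset.sum_sigma]
  refine Finset.sum_le_sum fun i _ => Finset.sum_le_sum fun j _ => ?_
  simp only [hB, Sum.elim_inl]
  by_cases hsub : (g i).2.1 j ⊆ S i
  · have hAS : (g i).2.1 j ∩ S i = (g i).2.1 j := inter_eq_left.mpr hsub
    rw [hAS]
    have hFf : ∀ x ∈ (g i).2.1 j,
        ENNReal.ofReal |∑ k, f k x| = ENNReal.ofReal |f i x| := by
      intro x hx
      have hfx : f i x ≠ 0 := hsub hx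
      have hsum : ∑ k, f k x = f i x :=
        Finset.sum_eq_single_of_mem i (Finset.mem_univ i)
          (fun k _ hk => (hd k i hk x).resolve_right hfx)
      rw [hsum]
    have hcongr : (⨅ x ∈ (g i).2.1 j, ENNReal.ofReal |∑ k, f k x|)
        = ⨅ x ∈ (g i).2.1 j, ENNReal.ofReal |f i x| :=
      iInf_congr fun x => iInf_congr fun hx => hFf x hx
    rw [hcongr]
  · obtain ⟨x₀, hx₀A, hx₀S⟩ := not_subset.mp hsub
    have hfi0 : f i x₀ = 0 := not_not.mp hx₀S
    have hzero : (⨅ x ∈ (g i).2.1 j, ENNReal.ofReal |f i x|) = 0 :=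
      le_antisymm ((iInf₂_le x₀ hx₀A).trans (by simp [hfi0])) zero_le
    rw [hzero, ENNReal.zero_rpow_of_pos hq, zero_mul]
    exact zero_le
end LambdaAux

open LambdaAux

/-- For `0 < p < q < ∞`, the `Λ_{p,q}(μ)`-quasinorm is the smallest
monotone homogeneous functional on the Borel functions satisfying a lower `q`-estimate
and `‖χ_A‖ ≥ μ(A)^{1/p}` for Borel `A`. -/
theorem lambdaSup_smallest
    {Ω : Type*} [TopologicalSpace Ω] [CompactSpace Ω] [T2Space Ω]
    [MeasurableSpace Ω] [BorelSpace Ω]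
    (p q : ℝ) (hp : 0 < p) (hpq : p < q)
    (μ : Measure Ω) [IsFiniteMeasure μ] :
    (∀ f g : Ω → ℝ, Measurable f → Measurable g → (∀ x, |f x| ≤ |g x|) →
      LambdaSup μ p q f ≤ LambdaSup μ p q g) ∧
    (∀ (α : ℝ) (f : Ω → ℝ), Measurable f →
      LambdaSup μ p q (fun x => α * f x) = ENNReal.ofReal |α| * LambdaSup μ p q f) ∧
    (∀ (n : ℕ) (f : Fin n → Ω → ℝ), (∀ i, Measurable (f i)) → DisjSupp f →
      (∑ i, LambdaSup μ p q (f i) ^ q) ^ (1 / q) ≤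
        LambdaSup μ p q (fun x => ∑ i, f i x)) ∧
    (∀ A : Set Ω, MeasurableSet A →
      μ A ^ (1 / p) ≤ LambdaSup μ p q (A.indicator 1)) ∧
    (∀ N : (Ω → ℝ) → ℝ≥0∞,
      (∀ f g : Ω → ℝ, Measurable f → Measurable g → (∀ x, |f x| ≤ |g x|) → N f ≤ N g) →
      (∀ (α : ℝ) (f : Ω → ℝ), Measurable f →
        N (fun x => α * f x) = ENNReal.ofReal |α| * N f) →
      (∀ (n : ℕ) (f : Fin n → Ω → ℝ), (∀ i, Measurable (f i)) → DisjSupp f →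
        (∑ i, N (f i) ^ q) ^ (1 / q) ≤ N (fun x => ∑ i, f i x)) →
      (∀ A : Set Ω, MeasurableSet A → μ A ^ (1 / p) ≤ N (A.indicator 1)) →
      ∀ f : Ω → ℝ, Measurable f → LambdaSup μ p q f ≤ N f) := by
  have hq : 0 < q := hp.trans hpq
  have hqp : 0 < q / p := div_pos hq hp
  refine ⟨?_, ?_, ?_, ?_, ?_⟩
  · -- monotonicity
    intro f g _ _ hfg
    rw [lambdaSup_eq, lambdaSup_eq]
    exact iSup_mono fun P => ENNReal.rpow_le_rpow (w_mono hq hfg P) (by positivity)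
  · -- homogeneity
    intro α f _
    rw [lambdaSup_eq, lambdaSup_eq, ENNReal.mul_iSup]
    refine iSup_congr fun P => ?_
    rw [w_smul hq hqp, ENNReal.mul_rpow_of_nonneg _ _ (by positivity),
      ← ENNReal.rpow_mul, mul_one_div_cancel hq.ne', ENNReal.rpow_one]
  · -- lower q-estimate
    intro n f hf hd
    have hle : ∑ i, LambdaSup μ p q (f i) ^ q
        ≤ LambdaSup μ p q (fun x => ∑ i, f i x) ^ q := by
      calc ∑ i, LambdaSup μ p q (f i) ^ q
          = ∑ i, ⨆ P : Parts Ω, w μ p q (f i) P :=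
            Finset.sum_congr rfl fun i _ => lambdaSup_pow μ hq (f i)
        _ ≤ ⨆ g : Fin n → Parts Ω, ∑ i, w μ p q (f i) (g i) :=
            sum_le_iSup_sum _
        _ ≤ LambdaSup μ p q (fun x => ∑ i, f i x) ^ q :=
            iSup_le fun g => key3 hq f hf hd g
    refine le_trans (ENNReal.rpow_le_rpow hle (by positivity)) (le_of_eq ?_)
    rw [← ENNReal.rpow_mul, mul_one_div_cancel hq.ne', ENNReal.rpow_one]
  · -- indicator bound
    intro A hA
    rcases eq_empty_or_nonempty A with rfl | hAne
    · simp only [measure_empty, ENNReal.zero_rpow_of_pos (by positivity : (0:ℝ) < 1/p)]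
      exact zero_le
    classical
    set A2 : Fin 2 → Set Ω := fun i => if i = 0 then A else Aᶜ with hA2
    have hA20 : A2 0 = A := if_pos rfl
    have hA21 : A2 1 = Aᶜ := if_neg (by decide)
    have htwo : ∀ k : Fin 2, k = 0 ∨ k = 1 := by decide
    have hpart : IsBorelPartition A2 := by
      refine ⟨?_, ?_, ?_⟩
      · intro i
        rcases htwo i with rfl | rfl
        · rw [hA20]; exact hA
        · rw [hA21]; exact hA.compl
      · have hd01 : Disjoint (A2 0) (A2 1) := by
          rw [hA20, hA21]; exact disjoint_compl_right
        intro i j hij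
        rcases htwo i with rfl | rfl <;> rcases htwo j with rfl | rfl
        · exact absurd rfl hij
        · exact hd01
        · exact hd01.symm
        · exact absurd rfl hij
      · refine eq_univ_of_forall fun x => ?_
        by_cases hx : x ∈ A
        · exact mem_iUnion.mpr ⟨0, hA20 ▸ hx⟩
        · exact mem_iUnion.mpr ⟨1, hA21 ▸ hx⟩
    have h0 : (⨅ x ∈ A, ENNReal.ofReal |A.indicator (1 : Ω → ℝ) x|) = 1 := by
      have hone : ∀ x, x ∈ A → ENNReal.ofReal |A.indicator (1 : Ω → ℝ) x| = 1 := by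
        intro x hx
        simp [indicator_of_mem hx]
      rw [iInf_congr fun x => iInf_congr fun hx => hone x hx]
      exact biInf_const hAne
    have hval : μ A ^ (1/p)
        ≤ (∑ i, (⨅ x ∈ A2 i, ENNReal.ofReal |A.indicator (1 : Ω → ℝ) x|) ^ q
            * μ (A2 i) ^ (q / p)) ^ (1 / q) := by
      have hterm0 : (⨅ x ∈ A2 0, ENNReal.ofReal |A.indicator (1 : Ω → ℝ) x|) ^ q
          * μ (A2 0) ^ (q / p) = μ A ^ (q / p) := by
        rw [hA20, h0, ENNReal.one_rpow, one_mul]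
      calc μ A ^ (1/p) = (μ A ^ (q/p)) ^ (1/q) := by
            rw [← ENNReal.rpow_mul]
            congr 1
            field_simp
        _ ≤ _ := by
            refine ENNReal.rpow_le_rpow ?_ (by positivity)
            rw [Fin.sum_univ_two, hterm0]
            exact le_self_add
    refine hval.trans ?_
    unfold LambdaSup
    exact le_iSup_of_le 2 (le_iSup_of_le A2 (le_iSup_of_le hpart le_rfl))
  · -- minimality
    intro N hmono hhom hlow hind f hfm
    rw [lambdaSup_eq]
    refine iSup_le ?_
    rintro ⟨n, A, hA⟩
    classical
    set r : Fin n → ℝ := fun i => sInf ((fun x => |f x|) '' A i) with hr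
    have hr0 : ∀ i, 0 ≤ r i := fun i =>
      Real.sInf_nonneg (by rintro y ⟨x, _, rfl⟩; exact abs_nonneg _)
    set φ : Fin n → Ω → ℝ := fun i x => r i * (A i).indicator 1 x with hφ
    have hφm : ∀ i, Measurable (φ i) := fun i =>
      measurable_const.mul (measurable_one.indicator (hA.1 i))
    have hφd : DisjSupp φ := by
      intro i j hij x
      by_cases hx : x ∈ A i
      · right
        have hxj : x ∉ A j := disjoint_left.mp (hA.2.1 hij) hx
        simp [hφ, indicator_of_notMem hxj]
      · left
        simp [hφ, indicator_of_notMem hx]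
    have hφf : ∀ x, |∑ i, φ i x| ≤ |f x| := by
      intro x
      have hxU : x ∈ ⋃ i, A i := hA.2.2 ▸ mem_univ x
      obtain ⟨i, hxi⟩ := mem_iUnion.mp hxU
      have hsum : ∑ j, φ j x = r i := by
        rw [Finset.sum_eq_single_of_mem i (Finset.mem_univ i)]
        · simp [hφ, indicator_of_mem hxi]
        · intro j _ hji
          have hxj : x ∉ A j := disjoint_right.mp (hA.2.1 hji) hxi
          simp [hφ, indicator_of_notMem hxj]
      rw [hsum, abs_of_nonneg (hr0 i)]
      exact csInf_le ⟨0, by rintro y ⟨z, _, rfl⟩; exact abs_nonneg _⟩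
        (mem_image_of_mem _ hxi)
    have hterm : ∀ i, (⨅ x ∈ A i, ENNReal.ofReal |f x|) ^ q * μ (A i) ^ (q / p)
        ≤ N (φ i) ^ q := by
      intro i
      rcases eq_empty_or_nonempty (A i) with hAi | hAi
      · rw [hAi]
        simp [ENNReal.zero_rpow_of_pos hqp]
      have hinf_le : (⨅ x ∈ A i, ENNReal.ofReal |f x|) ≤ ENNReal.ofReal (r i) := by
        refine ENNReal.le_of_forall_pos_le_add fun ε hε _ => ?_
        have hlt : sInf ((fun x => |f x|) '' A i) < r i + ε :=
          lt_add_of_pos_right _ (by exact_mod_cast hε)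
        obtain ⟨y, ⟨x, hxA, rfl⟩, hy⟩ := exists_lt_of_csInf_lt (hAi.image _) hlt
        refine (iInf₂_le x hxA).trans ?_
        calc ENNReal.ofReal |f x| ≤ ENNReal.ofReal (r i + ε) :=
              ENNReal.ofReal_le_ofReal hy.le
          _ = ENNReal.ofReal (r i) + ENNReal.ofReal ε :=
              ENNReal.ofReal_add (hr0 i) ε.coe_nonneg
          _ = ENNReal.ofReal (r i) + ε := by rw [ENNReal.ofReal_coe_nnreal]
      have hNφ : ENNReal.ofReal (r i) * μ (A i) ^ (1/p) ≤ N (φ i) := by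
        have h1 : N (φ i) = ENNReal.ofReal |r i| * N ((A i).indicator 1) :=
          hhom (r i) _ (measurable_one.indicator (hA.1 i))
        rw [h1, abs_of_nonneg (hr0 i)]
        exact mul_le_mul_right (hind (A i) (hA.1 i)) _
      calc (⨅ x ∈ A i, ENNReal.ofReal |f x|) ^ q * μ (A i) ^ (q / p)
          ≤ ENNReal.ofReal (r i) ^ q * μ (A i) ^ (q / p) :=
            mul_le_mul_left (ENNReal.rpow_le_rpow hinf_le hq.le) _
        _ = (ENNReal.ofReal (r i) * μ (A i) ^ (1/p)) ^ q := by
            rw [ENNReal.mul_rpow_of_nonneg _ _ hq.le, ← ENNReal.rpow_mul]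
            congr 2
            field_simp
        _ ≤ N (φ i) ^ q := ENNReal.rpow_le_rpow hNφ hq.le
    calc w μ p q f ⟨n, ⟨A, hA⟩⟩ ^ (1/q)
        ≤ (∑ i, N (φ i) ^ q) ^ (1/q) := by
          refine ENNReal.rpow_le_rpow ?_ (by positivity)
          simp only [w]
          exact Finset.sum_le_sum fun i _ => hterm i
      _ ≤ N (fun x => ∑ i, φ i x) := hlow n φ hφm hφd
      _ ≤ N f := hmono _ f (Finset.measurable_sum Finset.univ fun i _ => hφm i) hfm hφf
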